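/- Let ρ, L, γ₀ > 0 and let h : ℝ × X → X satisfy sup_{t∈ℝ} ‖h(t,0)‖ ≤ γ₀ and ‖h(t,x₁) − h(t,x₂)‖ ≤ L ‖x₁ − x₂‖ for all t ∈ ℝ and all x₁, x₂ ∈ X with ‖x₁‖ ≤ ρ and ‖x₂‖ ≤ ρ, and assume t ↦ h(t, v(t)) is continuous for every bounded continuous v. Then for every bounded continuous v : ℝ → X with sup_{t∈ℝ} ‖v(t)‖ ≤ ρ, the function Φ(v)(t) := ∫_ℝ G(t,s) h(s, v(s)) ds satisfies sup_{t∈ℝ} ‖Φ(v)(t)‖ ≤ (2(1+H)N/β)(Lρ + γ₀). -/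

import Mathlib

open MeasureTheory Real Filter Bornology

/-- An evolution family on a Banach space `X` together with an exponential dichotomy:
projections `P t`, the inverses `V s t` of the restrictions of `U t s` to the kernels
of the projections (i.e. `V s t = U_Q(s,t)` for `s ≤ t`), dichotomy constants `N, β`
and a bound `H` on the norms of the projections. -/
structure EvolutionDichotomy (X : Type*) [NormedAddCommGroup X] [NormedSpace ℝ X] where
  U : ℝ → ℝ → X →L[ℝ] X
  P : ℝ → X →L[ℝ] X
  V : ℝ → ℝ → X →L[ℝ] X
  N : ℝ
  β : ℝ
  H : ℝ
  N_pos : 0 < N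
  β_pos : 0 < β
  U_id : ∀ s, U s s = ContinuousLinearMap.id ℝ X
  U_comp : ∀ ⦃s r t : ℝ⦄, s ≤ r → r ≤ t → ∀ x, U t r (U r s x) = U t s x
  U_cont : ∀ x : X, ContinuousOn (fun p : ℝ × ℝ => U p.1 p.2 x) {p : ℝ × ℝ | p.2 ≤ p.1}
  P_proj : ∀ t x, P t (P t x) = P t x
  P_cont : ∀ x : X, Continuous fun t => P t x
  P_bound : ∀ t, ‖P t‖ ≤ H
  comm : ∀ ⦃s t : ℝ⦄, s ≤ t → ∀ x, P t (U t s x) = U t s (P s x)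
  V_mapsTo : ∀ ⦃s t : ℝ⦄, s ≤ t → ∀ x, P s (V s t (x - P t x)) = 0
  V_left : ∀ ⦃s t : ℝ⦄, s ≤ t → ∀ x, V s t (U t s (x - P s x)) = x - P s x
  V_right : ∀ ⦃s t : ℝ⦄, s ≤ t → ∀ x, U t s (V s t (x - P t x)) = x - P t x
  P_decay : ∀ ⦃s t : ℝ⦄, s ≤ t → ∀ x, ‖U t s (P s x)‖ ≤ N * Real.exp (-β * (t - s)) * ‖x‖
  Q_decay : ∀ ⦃s t : ℝ⦄, s ≤ t → ∀ x, ‖V s t (x - P t x)‖ ≤ N * Real.exp (-β * (t - s)) * ‖x‖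

namespace EvolutionDichotomy

variable {X : Type*} [NormedAddCommGroup X] [NormedSpace ℝ X]

/-- The complementary projection `Q t = Id - P t`. -/
noncomputable def Q (E : EvolutionDichotomy X) (t : ℝ) : X →L[ℝ] X :=
  ContinuousLinearMap.id ℝ X - E.P t

/-- The Green function of the dichotomy: `G t s = P t ∘ U t s` for `t > s` and
`G t s = -(U_Q(t,s) ∘ Q s)` for `t ≤ s`. -/
noncomputable def G (E : EvolutionDichotomy X) (t s : ℝ) : X →L[ℝ] X :=
  if s < t then (E.P t).comp (E.U t s) else -((E.V t s).comp (E.Q s))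

/-- The Green function is exponentially almost periodic. -/
def ExpAP (E : EvolutionDichotomy X) : Prop :=
  ∀ η > (0:ℝ), ∀ ε > (0:ℝ), ∃ γ > (0:ℝ), ∃ l > (0:ℝ), ∀ a : ℝ,
    ∃ T ∈ Set.Icc a (a + l), ∀ t s : ℝ, η ≤ |t - s| →
      ‖E.G (t + T) (s + T) - E.G t s‖ ≤ ε * Real.exp (-γ * |t - s|)

end EvolutionDichotomy

/-- A bounded continuous function `f : ℝ → X` is (Bohr) almost periodic if for every `ε > 0`
there is `l > 0` such that every interval of length `l` contains an `ε`-almost period. -/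
def AlmostPeriodic {X : Type*} [NormedAddCommGroup X] (f : ℝ → X) : Prop :=
  Continuous f ∧ Bornology.IsBounded (Set.range f) ∧
  ∀ ε > (0:ℝ), ∃ l > (0:ℝ), ∀ a : ℝ, ∃ T ∈ Set.Icc a (a + l),
    ∀ t : ℝ, ‖f (t + T) - f t‖ < ε

/-- A function on `[0,∞)` is asymptotically almost periodic if it is the sum of an almost
periodic function and a continuous function vanishing at infinity. -/
def AsympAlmostPeriodic {X : Type*} [NormedAddCommGroup X] (g : ℝ → X) : Prop :=
  ∃ h φ : ℝ → X, AlmostPeriodic h ∧ ContinuousOn φ (Set.Ici 0) ∧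
    Filter.Tendsto (fun t => ‖φ t‖) Filter.atTop (nhds 0) ∧
    ∀ t : ℝ, 0 ≤ t → g t = h t + φ t

/-- `PAP0`: bounded continuous functions with vanishing mean value. -/
def PAP0 {X : Type*} [NormedAddCommGroup X] (φ : ℝ → X) : Prop :=
  Continuous φ ∧ Bornology.IsBounded (Set.range φ) ∧
  Filter.Tendsto (fun r : ℝ => (1 / (2 * r)) * ∫ t in (-r)..r, ‖φ t‖)
    Filter.atTop (nhds 0)

/-- A bounded continuous function is pseudo almost periodic if it is the sum of an almost
periodic function and a `PAP0` function. -/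
def PseudoAP {X : Type*} [NormedAddCommGroup X] (f : ℝ → X) : Prop :=
  ∃ g φ : ℝ → X, AlmostPeriodic g ∧ PAP0 φ ∧ ∀ t : ℝ, f t = g t + φ t

section Helpers
open Set
lemma integrable_exp_neg_abs' {β : ℝ} (hβ : 0 < β) :
    Integrable (fun u : ℝ => Real.exp (-β * |u|)) := by
  have hIoi : IntegrableOn (fun u : ℝ => Real.exp (-β * |u|)) (Ioi 0) := by
    refine ((exp_neg_integrableOn_Ioi 0 hβ).congr_fun (fun x hx => ?_) measurableSet_Ioi)
    rw [abs_of_pos hx]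
  have hIic : IntegrableOn (fun u : ℝ => Real.exp (-β * |u|)) (Iic 0) := by
    rw [← Measure.map_neg_eq_self (volume : Measure ℝ)]
    have m : MeasurableEmbedding fun x : ℝ => -x := (Homeomorph.neg ℝ).measurableEmbedding
    rw [m.integrableOn_map_iff]
    simp_rw [Function.comp_def, abs_neg, neg_preimage, neg_Iic, neg_zero]
    exact Iff.mpr integrableOn_Ici_iff_integrableOn_Ioi hIoi
  have := hIic.union hIoi
  rwa [Iic_union_Ioi, integrableOn_univ] at this

lemma integral_exp_neg_abs' {β : ℝ} (hβ : 0 < β) :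
    ∫ u : ℝ, Real.exp (-β * |u|) = 2 / β := by
  rw [integral_comp_abs (f := fun x => Real.exp (-β * x))]
  have : ∀ x : ℝ, Real.exp (-β * x) = Real.exp (-(β * x)) := by intro x; rw [neg_mul]
  simp_rw [this]
  rw [integral_comp_mul_left_Ioi (fun y => Real.exp (-y)) 0 hβ]
  simp [integral_exp_neg_Ioi, Real.exp_zero, div_eq_mul_inv, integral_exp_Iic_zero]
end Helpers

/-- under the Lipschitz-type assumptions on the nonlinearity `h`,
the map `Φ(v)(t) = ∫_ℝ G(t,s) h(s,v(s)) ds` satisfies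
`sup_t ‖Φ(v)(t)‖ ≤ (2(1+H)N/β)(Lρ + γ₀)` for every bounded continuous `v` with
`sup_t ‖v(t)‖ ≤ ρ`. -/
theorem nonlinear_solution_map_bound
    {X : Type*} [NormedAddCommGroup X] [NormedSpace ℝ X] [CompleteSpace X]
    (E : EvolutionDichotomy X)
    (ρ L γ₀ : ℝ) (hρ : 0 < ρ) (hL : 0 < L) (hγ₀ : 0 < γ₀)
    (h : ℝ → X → X)
    (hh0 : ∀ t : ℝ, ‖h t 0‖ ≤ γ₀)
    (hhL : ∀ t : ℝ, ∀ x₁ x₂ : X, ‖x₁‖ ≤ ρ → ‖x₂‖ ≤ ρ →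
      ‖h t x₁ - h t x₂‖ ≤ L * ‖x₁ - x₂‖)
    (hhc : ∀ v : ℝ → X, Continuous v → Bornology.IsBounded (Set.range v) →
      Continuous (fun t : ℝ => h t (v t)))
    (v : ℝ → X) (hvc : Continuous v) (hvρ : ∀ t : ℝ, ‖v t‖ ≤ ρ) :
    ∀ t : ℝ, ‖∫ s : ℝ, E.G t s (h s (v s))‖ ≤
      (2 * (1 + E.H) * E.N / E.β) * (L * ρ + γ₀) := by
  intro t
  have hN := E.N_pos
  have hβ := E.β_pos
  have hH : (0:ℝ) ≤ E.H := le_trans (norm_nonneg _) (E.P_bound 0)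
  set C : ℝ := L * ρ + γ₀ with hC
  have hCpos : 0 < C := by positivity
  -- bound on the nonlinearity
  have hhb : ∀ s : ℝ, ‖h s (v s)‖ ≤ C := by
    intro s
    have h1 : ‖h s (v s)‖ ≤ ‖h s (v s) - h s 0‖ + ‖h s 0‖ := by
      calc ‖h s (v s)‖ = ‖(h s (v s) - h s 0) + h s 0‖ := by rw [sub_add_cancel]
        _ ≤ ‖h s (v s) - h s 0‖ + ‖h s 0‖ := norm_add_le _ _
    have h2 : ‖h s (v s) - h s 0‖ ≤ L * ‖v s - 0‖ :=
      hhL s (v s) 0 (hvρ s) (by simp [hρ.le])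
    have h3 : L * ‖v s - 0‖ ≤ L * ρ := by
      rw [sub_zero]; exact mul_le_mul_of_nonneg_left (hvρ s) hL.le
    calc ‖h s (v s)‖ ≤ L * ρ + γ₀ := by linarith [hh0 s]
      _ = C := rfl
  -- Green function bound
  have hG : ∀ s : ℝ, ∀ x : X, ‖E.G t s x‖ ≤ E.N * Real.exp (-E.β * |t - s|) * ‖x‖ := by
    intro s x
    by_cases hst : s < t
    · rw [EvolutionDichotomy.G, if_pos hst]
      simp only [ContinuousLinearMap.comp_apply]
      rw [E.comm hst.le, abs_of_nonneg (sub_nonneg.mpr hst.le)]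
      exact E.P_decay hst.le x
    · push_neg at hst
      rw [EvolutionDichotomy.G, if_neg (not_lt.mpr hst)]
      simp only [ContinuousLinearMap.neg_apply, ContinuousLinearMap.comp_apply, norm_neg,
        EvolutionDichotomy.Q, ContinuousLinearMap.sub_apply, ContinuousLinearMap.id_apply]
      rw [abs_sub_comm, abs_of_nonneg (sub_nonneg.mpr hst)]
      exact E.Q_decay hst x
  -- pointwise bound for the integrand
  have hfb : ∀ s : ℝ, ‖E.G t s (h s (v s))‖ ≤ E.N * C * Real.exp (-E.β * |t - s|) := by
    intro s
    calc ‖E.G t s (h s (v s))‖ ≤ E.N * Real.exp (-E.β * |t - s|) * ‖h s (v s)‖ := hG s _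
      _ ≤ E.N * Real.exp (-E.β * |t - s|) * C := by
          exact mul_le_mul_of_nonneg_left (hhb s) (by positivity)
      _ = E.N * C * Real.exp (-E.β * |t - s|) := by ring
  -- the dominating function is integrable
  have hgint : Integrable (fun s : ℝ => E.N * C * Real.exp (-E.β * |t - s|)) :=
    ((integrable_exp_neg_abs' hβ).comp_sub_left t).const_mul (E.N * C)
  have hgval : ∫ s : ℝ, E.N * C * Real.exp (-E.β * |t - s|) = E.N * C * (2 / E.β) := by
    rw [integral_const_mul]
    congr 1
    rw [integral_sub_left_eq_self (fun u : ℝ => Real.exp (-E.β * |u|)) (volume) t]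
    exact integral_exp_neg_abs' hβ
  have hfinal : E.N * C * (2 / E.β) ≤ 2 * (1 + E.H) * E.N / E.β * C := by
    have e1 : E.N * C * (2 / E.β) = 2 * E.N * C / E.β := by ring
    have e2 : 2 * (1 + E.H) * E.N / E.β * C = 2 * (1 + E.H) * E.N * C / E.β := by ring
    rw [e1, e2]
    gcongr
    nlinarith [mul_pos hN hCpos]
  by_cases hint : Integrable (fun s : ℝ => E.G t s (h s (v s)))
  · calc ‖∫ s : ℝ, E.G t s (h s (v s))‖ ≤ ∫ s : ℝ, ‖E.G t s (h s (v s))‖ :=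
        norm_integral_le_integral_norm _
      _ ≤ ∫ s : ℝ, E.N * C * Real.exp (-E.β * |t - s|) :=
        integral_mono hint.norm hgint (fun s => hfb s)
      _ = E.N * C * (2 / E.β) := hgval
      _ ≤ _ := hfinal
  · rw [integral_undef hint, norm_zero]
    positivity
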